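/- For (x, y, z, t) ∈ ℂ⁴ let N(x,y,z,t) be the 3×3 matrix with rows (t, x, y), (y + z, −y, 2x + t), (y, 0, x + y − z), and let M(x,y,z,t) = [[0, N], [−Nᵀ, 0]] be the associated 6×6 block matrix. Then for every nonzero (x, y, z, t) ∈ ℂ⁴ the rank of M(x,y,z,t) is at least 4. -/

import Mathlib

open Matrix

/-- The `3 × 3` matrix of linear forms giving the determinantal representation
of the cubic surface of class `T₄`. -/
def T4N (x y z t : ℂ) : Matrix (Fin 3) (Fin 3) ℂ :=
  !![t, x, y;
     y + z, -y, 2 * x + t;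
     y, 0, x + y - z]

/-- The associated `6 × 6` skew-symmetric block matrix `M = [[0, N], [−Nᵀ, 0]]`. -/
def T4M (x y z t : ℂ) : Matrix (Fin 3 ⊕ Fin 3) (Fin 3 ⊕ Fin 3) ℂ :=
  Matrix.fromBlocks 0 (T4N x y z t) (-(T4N x y z t)ᵀ) 0

lemma rank_submatrix_le_general {n m : Type*} [Fintype n] [Fintype m] [DecidableEq m]
    (A : Matrix m m ℂ) (f g : n → m) : (A.submatrix f g).rank ≤ A.rank := by
  have h1 : ((1 : Matrix m m ℂ).submatrix f (Equiv.refl m)) * A = A.submatrix f id := by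
    rw [Matrix.one_submatrix_mul]; simp
  have h2 : A.submatrix f id * ((1 : Matrix m m ℂ).submatrix (Equiv.refl m) g)
      = A.submatrix f g := by
    rw [Matrix.mul_submatrix_one]; simp
  calc (A.submatrix f g).rank
      = (A.submatrix f id * ((1 : Matrix m m ℂ).submatrix (Equiv.refl m) g)).rank := by rw [h2]
    _ ≤ (A.submatrix f id).rank := Matrix.rank_mul_le_left _ _
    _ = (((1 : Matrix m m ℂ).submatrix f (Equiv.refl m)) * A).rank := by rw [h1]
    _ ≤ A.rank := Matrix.rank_mul_le_right _ _

lemma antidiag_isUnit (S : Matrix (Fin 2) (Fin 2) ℂ) (hS : S.det ≠ 0) :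
    IsUnit (Matrix.fromBlocks (0 : Matrix (Fin 2) (Fin 2) ℂ) S (-Sᵀ) 0) := by
  have hdet : IsUnit S.det := isUnit_iff_ne_zero.mpr hS
  have hdetT : IsUnit Sᵀ.det := by rwa [Matrix.det_transpose]
  have hmul : Matrix.fromBlocks (0 : Matrix (Fin 2) (Fin 2) ℂ) S (-Sᵀ) 0 *
      Matrix.fromBlocks 0 (-(Sᵀ)⁻¹) S⁻¹ 0 = 1 := by
    rw [Matrix.fromBlocks_multiply]
    simp [Matrix.mul_nonsing_inv S hdet, Matrix.mul_nonsing_inv Sᵀ hdetT,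
      ← Matrix.fromBlocks_one]
  have := invertibleOfRightInverse _ _ hmul
  exact isUnit_of_invertible _

lemma key (x y z t : ℂ) (r1 r2 c1 c2 : Fin 3)
    (hd : T4N x y z t r1 c1 * T4N x y z t r2 c2
      - T4N x y z t r1 c2 * T4N x y z t r2 c1 ≠ 0) :
    4 ≤ (T4M x y z t).rank := by
  set N := T4N x y z t with hN
  set S : Matrix (Fin 2) (Fin 2) ℂ := N.submatrix ![r1, r2] ![c1, c2] with hSdef
  have hS : S.det ≠ 0 := by
    rw [Matrix.det_fin_two]
    simpa [hSdef] using hd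
  have hsub : (T4M x y z t).submatrix (Sum.map ![r1, r2] ![c1, c2])
      (Sum.map ![r1, r2] ![c1, c2]) = Matrix.fromBlocks 0 S (-Sᵀ) 0 := by
    ext i j
    rcases i with i | i <;> rcases j with j | j <;> fin_cases i <;> fin_cases j <;>
      simp [T4M, Matrix.fromBlocks, hSdef, hN, Matrix.transpose]
  have hunit := antidiag_isUnit S hS
  have hrank4 : ((T4M x y z t).submatrix (Sum.map ![r1, r2] ![c1, c2])
      (Sum.map ![r1, r2] ![c1, c2])).rank = 4 := by
    rw [hsub, Matrix.rank_of_isUnit _ hunit]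
    simp
  calc (4 : ℕ) = _ := hrank4.symm
    _ ≤ (T4M x y z t).rank := rank_submatrix_le_general _ _ _

/-- For every nonzero `(x, y, z, t) ∈ ℂ⁴`, the rank of `M(x,y,z,t)` is at least `4`:
the web spanned by the coefficient matrices of `M` is disjoint from `G(3,5)`. -/
theorem T4M_rank_ge_four (x y z t : ℂ) (h : ¬(x = 0 ∧ y = 0 ∧ z = 0 ∧ t = 0)) :
    4 ≤ (T4M x y z t).rank := by
  by_cases hy : y = 0
  · subst hy
    by_cases hx : x = 0
    · subst hx
      by_cases ht : t = 0
      · subst ht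
        have hz : z ≠ 0 := by tauto
        refine key 0 0 z 0 1 2 0 2 ?_
        simp [T4N]
        exact hz
      · refine key 0 0 z t 0 1 0 2 ?_
        simp [T4N]
        exact ht
    · by_cases hxz : x - z = 0
      · refine key x 0 z t 0 1 0 1 ?_
        have hzx : z = x := by linear_combination -hxz
        subst hzx
        simp [T4N]
        exact hx
      · refine key x 0 z t 0 2 1 2 ?_
        simp [T4N]
        exact ⟨hx, hxz⟩
  · refine key x y z t 1 2 0 1 ?_
    simp [T4N]
    exact hy
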